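/- For every real a > -2 and every ξ > 0 there exists a constant C > 0 such that for all integers k ≥ 4, Σ_{l=2}^{⌊k/2⌋} ξ^{l-2}·Γ(k-2(l-1)+a) ≤ C·Γ(k-2+a). -/

import Mathlib

open Real Filter

lemma gamma_convolution_aux (a : ℝ) (ha : -2 < a) :
    ∀ n : ℕ, ∀ y : ℝ, 0 ≤ y →
      Real.Gamma (y + 2 + a) * Real.Gamma ((n : ℝ) + 2 + a) ≤
        Real.Gamma (y + (n : ℝ) + 2 + a) * Real.Gamma (2 + a) := by
  intro n
  induction n with
  | zero =>
      intro y hy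
      norm_num
  | succ n ih =>
      intro y hy
      have h2 : (0:ℝ) < 2 + a := by linarith
      have hn0 : (0:ℝ) ≤ (n:ℝ) := n.cast_nonneg
      have hn2 : (0:ℝ) < (n:ℝ) + 2 + a := by linarith
      have hyn2 : (0:ℝ) < y + (n:ℝ) + 2 + a := by linarith
      have hrec1 : Real.Gamma (((n:ℝ)+1) + 2 + a) = ((n:ℝ) + 2 + a) * Real.Gamma ((n:ℝ) + 2 + a) := by
        have := Real.Gamma_add_one (s := (n:ℝ) + 2 + a) (ne_of_gt hn2)
        rw [show ((n:ℝ)+1) + 2 + a = ((n:ℝ) + 2 + a) + 1 by ring, this]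
      have hrec2 : Real.Gamma (y + ((n:ℝ)+1) + 2 + a) = (y + (n:ℝ) + 2 + a) * Real.Gamma (y + (n:ℝ) + 2 + a) := by
        have := Real.Gamma_add_one (s := y + (n:ℝ) + 2 + a) (ne_of_gt hyn2)
        rw [show y + ((n:ℝ)+1) + 2 + a = (y + (n:ℝ) + 2 + a) + 1 by ring, this]
      have hΓpos : 0 < Real.Gamma (y + (n:ℝ) + 2 + a) := Real.Gamma_pos_of_pos hyn2
      have hΓ2 : 0 < Real.Gamma (2 + a) := Real.Gamma_pos_of_pos h2
      have hΓy : 0 < Real.Gamma (y + 2 + a) := Real.Gamma_pos_of_pos (by linarith)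
      have hih := ih y hy
      push_cast
      rw [hrec1, hrec2]
      calc Real.Gamma (y + 2 + a) * (((n:ℝ) + 2 + a) * Real.Gamma ((n:ℝ) + 2 + a))
          = ((n:ℝ) + 2 + a) * (Real.Gamma (y + 2 + a) * Real.Gamma ((n:ℝ) + 2 + a)) := by ring
        _ ≤ ((n:ℝ) + 2 + a) * (Real.Gamma (y + (n:ℝ) + 2 + a) * Real.Gamma (2 + a)) := by
              apply mul_le_mul_of_nonneg_left hih (le_of_lt hn2)
        _ ≤ (y + (n:ℝ) + 2 + a) * (Real.Gamma (y + (n:ℝ) + 2 + a) * Real.Gamma (2 + a)) := by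
              apply mul_le_mul_of_nonneg_right (by linarith) (by positivity)
        _ = (y + (n:ℝ) + 2 + a) * Real.Gamma (y + (n:ℝ) + 2 + a) * Real.Gamma (2 + a) := by ring

/-- For every `a > -2` and `ξ > 0` there is a `C > 0` such that for all `k ≥ 4`,
`Σ_{l=2}^{⌊k/2⌋} ξ^{l-2} Γ(k-2(l-1)+a) ≤ C Γ(k-2+a)`. -/
theorem stmt6 (a : ℝ) (ha : -2 < a) (ξ : ℝ) (hξ : 0 < ξ) :
    ∃ C > (0 : ℝ), ∀ k : ℕ, 4 ≤ k →
      ∑ l ∈ Finset.Icc 2 (k / 2),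
        ξ ^ (l - 2) * Real.Gamma ((k : ℝ) - 2 * ((l : ℝ) - 1) + a)
      ≤ C * Real.Gamma ((k : ℝ) - 2 + a) := by
  have h2 : (0:ℝ) < 2 + a := by linarith
  have hΓ2 : 0 < Real.Gamma (2 + a) := Real.Gamma_pos_of_pos h2
  set f : ℕ → ℝ := fun j => ξ ^ j * Real.Gamma (2 + a) / Real.Gamma (2 * (j:ℝ) + 2 + a) with hf
  have hfpos : ∀ j, 0 < f j := by
    intro j
    have : (0:ℝ) < 2 * (j:ℝ) + 2 + a := by
      have : (0:ℝ) ≤ (j:ℝ) := j.cast_nonneg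
      linarith
    have := Real.Gamma_pos_of_pos this
    positivity
  -- ratio relation
  have hratio : ∀ j : ℕ, f (j + 1) = f j * (ξ / ((2 * (j:ℝ) + 2 + a) * (2 * (j:ℝ) + 3 + a))) := by
    intro j
    have hj0 : (0:ℝ) ≤ (j:ℝ) := j.cast_nonneg
    have hx1 : (0:ℝ) < 2 * (j:ℝ) + 2 + a := by linarith
    have hx2 : (0:ℝ) < 2 * (j:ℝ) + 3 + a := by linarith
    have e1 : Real.Gamma (2 * ((j:ℝ)+1) + 2 + a)
        = (2 * (j:ℝ) + 3 + a) * ((2 * (j:ℝ) + 2 + a) * Real.Gamma (2 * (j:ℝ) + 2 + a)) := by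
      have g1 := Real.Gamma_add_one (s := 2 * (j:ℝ) + 2 + a) (ne_of_gt hx1)
      have g2 := Real.Gamma_add_one (s := 2 * (j:ℝ) + 3 + a) (ne_of_gt hx2)
      rw [show 2 * ((j:ℝ)+1) + 2 + a = (2 * (j:ℝ) + 3 + a) + 1 by ring, g2,
        show 2 * (j:ℝ) + 3 + a = (2 * (j:ℝ) + 2 + a) + 1 by ring, g1]
    have hΓ : 0 < Real.Gamma (2 * (j:ℝ) + 2 + a) := Real.Gamma_pos_of_pos hx1
    simp only [hf]
    push_cast
    rw [e1]
    field_simp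
    ring
  have hsum : Summable f := by
    obtain ⟨N, hN⟩ := exists_nat_ge (ξ + |a| + 2)
    apply summable_of_ratio_norm_eventually_le (r := 1/2) (by norm_num)
    filter_upwards [eventually_ge_atTop N] with j hj
    have hjN : (N:ℝ) ≤ (j:ℝ) := by exact_mod_cast hj
    have habs : -|a| ≤ a := neg_abs_le a
    have hx1 : 2 * ξ ≤ 2 * (j:ℝ) + 2 + a := by nlinarith [abs_nonneg a]
    have hx1' : (1:ℝ) ≤ 2 * (j:ℝ) + 2 + a := by nlinarith [abs_nonneg a]
    have hx2 : (1:ℝ) ≤ 2 * (j:ℝ) + 3 + a := by linarith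
    have hprod : 2 * ξ ≤ (2 * (j:ℝ) + 2 + a) * (2 * (j:ℝ) + 3 + a) := by nlinarith
    have hkey : f (j + 1) ≤ 1/2 * f j := by
      rw [hratio j]
      have hfj := hfpos j
      have hle : ξ / ((2 * (j:ℝ) + 2 + a) * (2 * (j:ℝ) + 3 + a)) ≤ 1/2 := by
        rw [div_le_iff₀ (by nlinarith)]
        nlinarith
      calc f j * (ξ / ((2 * (j:ℝ) + 2 + a) * (2 * (j:ℝ) + 3 + a))) ≤ f j * (1/2) :=
            mul_le_mul_of_nonneg_left hle (le_of_lt hfj)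
        _ = 1/2 * f j := by ring
    rw [Real.norm_eq_abs, Real.norm_eq_abs, abs_of_pos (hfpos _), abs_of_pos (hfpos _)]
    exact hkey
  refine ⟨∑' j, f j, ?_, ?_⟩
  · have h0 : f 0 ≤ ∑' j, f j := Summable.le_tsum hsum 0 (fun i _ => (hfpos i).le)
    exact lt_of_lt_of_le (hfpos 0) h0
  intro k hk
  have hΓk : 0 < Real.Gamma ((k:ℝ) - 2 + a) := by
    apply Real.Gamma_pos_of_pos
    have : (4:ℝ) ≤ (k:ℝ) := by exact_mod_cast hk
    linarith
  calc ∑ l ∈ Finset.Icc 2 (k / 2),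
        ξ ^ (l - 2) * Real.Gamma ((k : ℝ) - 2 * ((l : ℝ) - 1) + a)
      ≤ ∑ l ∈ Finset.Icc 2 (k / 2), f (l - 2) * Real.Gamma ((k:ℝ) - 2 + a) := by
        apply Finset.sum_le_sum
        intro l hl
        rw [Finset.mem_Icc] at hl
        obtain ⟨hl2, hlk⟩ := hl
        have h2l : 2 * l ≤ k := by omega
        have h2lR : 2 * (l:ℝ) ≤ (k:ℝ) := by exact_mod_cast h2l
        have hyl : (0:ℝ) ≤ (k:ℝ) - 2 * (l:ℝ) := by linarith
        have hcast : ((2 * l - 4 : ℕ) : ℝ) = 2 * (l:ℝ) - 4 := by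
          have : 4 ≤ 2 * l := by omega
          push_cast [Nat.cast_sub this]
          ring
        have key := gamma_convolution_aux a ha (2 * l - 4) ((k:ℝ) - 2 * (l:ℝ)) hyl
        rw [hcast] at key
        have e1 : (k:ℝ) - 2 * (l:ℝ) + 2 + a = (k:ℝ) - 2 * ((l:ℝ) - 1) + a := by ring
        have e2 : (k:ℝ) - 2 * (l:ℝ) + (2 * (l:ℝ) - 4) + 2 + a = (k:ℝ) - 2 + a := by ring
        rw [e1, e2] at key
        -- key : Γ(k-2(l-1)+a) * Γ(2l-2+a) ≤ Γ(k-2+a) * Γ(2+a)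
        have hcastl : ((l - 2 : ℕ) : ℝ) = (l:ℝ) - 2 := by
          push_cast [Nat.cast_sub hl2]; ring
        have hfl : f (l - 2) = ξ ^ (l - 2) * Real.Gamma (2 + a) / Real.Gamma (2 * (l:ℝ) - 2 + a) := by
          simp only [hf, hcastl]
          norm_num
          rw [show 2 * ((l:ℝ) - 2) + 2 + a = 2 * (l:ℝ) - 2 + a by ring]
        have hxl : (0:ℝ) < 2 * (l:ℝ) - 2 + a := by
          have : (2:ℝ) ≤ (l:ℝ) := by exact_mod_cast hl2
          linarith
        have hΓl : 0 < Real.Gamma (2 * (l:ℝ) - 2 + a) := Real.Gamma_pos_of_pos hxl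
        rw [hfl]
        rw [div_mul_eq_mul_div, le_div_iff₀ hΓl]
        have hξp : (0:ℝ) ≤ ξ ^ (l - 2) := by positivity
        calc ξ ^ (l - 2) * Real.Gamma ((k:ℝ) - 2 * ((l:ℝ) - 1) + a) * Real.Gamma (2 * (l:ℝ) - 2 + a)
            = ξ ^ (l - 2) * (Real.Gamma ((k:ℝ) - 2 * ((l:ℝ) - 1) + a) * Real.Gamma ((2 * (l:ℝ) - 4) + 2 + a)) := by
              rw [show (2 * (l:ℝ) - 4) + 2 + a = 2 * (l:ℝ) - 2 + a by ring]; ring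
          _ ≤ ξ ^ (l - 2) * (Real.Gamma ((k:ℝ) - 2 + a) * Real.Gamma (2 + a)) :=
              mul_le_mul_of_nonneg_left key hξp
          _ = ξ ^ (l - 2) * Real.Gamma (2 + a) * Real.Gamma ((k:ℝ) - 2 + a) := by ring
    _ = (∑ l ∈ Finset.Icc 2 (k / 2), f (l - 2)) * Real.Gamma ((k:ℝ) - 2 + a) := by
        rw [Finset.sum_mul]
    _ ≤ (∑' j, f j) * Real.Gamma ((k:ℝ) - 2 + a) := by
        apply mul_le_mul_of_nonneg_right _ hΓk.le
        have : ∑ l ∈ Finset.Icc 2 (k / 2), f (l - 2) = ∑ j ∈ (Finset.Icc 2 (k / 2)).image (fun l => l - 2), f j := by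
          rw [Finset.sum_image]
          intro x hx y hy hxy
          rw [Finset.coe_Icc, Set.mem_Icc] at hx hy
          simp only at hxy
          omega
        rw [this]
        exact Summable.sum_le_tsum _ (fun i _ => (hfpos i).le) hsum
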